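/- For every t > 0 and every i with 0 ≤ i < t, if v ≥ 2t+2−i, then the symmetric difference of the two (t+1)-dimensional linear subspaces T = span({1},{2},…,{i},{i+1},{i+2},…,{t+1}) and T' = span({1},{2},…,{i},{t+2},{t+3},…,{2t+2−i}) of F_2^v (spans of the indicated standard basis vectors) can be split into a [t]-trade; the resulting trade has volume 2^{t+1} − 2^i. In particular, splitting T Δ T' by assigning the elements of T of even weight together with the elements of T' \ T of odd weight to one leg, and the rest to the other leg, yields such a [t]-trade. -/

import Mathlib

open scoped Classical

/-- The size (number of ones) of a vector of `F_2^v`. -/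
def size {v : ℕ} (x : Fin v → ZMod 2) : ℕ :=
  (Finset.univ.filter (fun j => x j = 1)).card

/-- A `[t]`-trade. -/
def IsTrade (t v : ℕ) (T0 T1 : Finset (Fin v → ZMod 2)) : Prop :=
  Disjoint T0 T1 ∧
  ∀ s : Fin v → ZMod 2, size s ≤ t →
    (T0.filter (fun x => ∀ j, s j = 1 → x j = 1)).card =
    (T1.filter (fun x => ∀ j, s j = 1 → x j = 1)).card


lemma mem_span_single_iff {v : ℕ} (P : Fin v → Prop) (x : Fin v → ZMod 2) :
    x ∈ Submodule.span (ZMod 2) {y : Fin v → ZMod 2 | ∃ j : Fin v, P j ∧ y = Pi.single j 1} ↔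
      ∀ j, ¬ P j → x j = 0 := by
  constructor
  · intro hx j hj
    have hle : Submodule.span (ZMod 2) {y : Fin v → ZMod 2 | ∃ j : Fin v, P j ∧ y = Pi.single j 1}
        ≤ LinearMap.ker (LinearMap.proj (R := ZMod 2) (φ := fun _ : Fin v => ZMod 2) j) := by
      rw [Submodule.span_le]
      rintro y ⟨k, hk, rfl⟩
      have hkj : j ≠ k := fun h => hj (h ▸ hk)
      simp [LinearMap.mem_ker, Pi.single_eq_of_ne hkj]
    exact hle hx
  · intro h
    have hx : x = ∑ k, x k • Pi.single k (1 : ZMod 2) := by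
      funext j; simp [Finset.sum_apply, Pi.single_apply]
    rw [hx]
    refine Submodule.sum_mem _ fun k _ => ?_
    by_cases hk : x k = 0
    · simp [hk]
    · exact Submodule.smul_mem _ _ (Submodule.subset_span
        ⟨k, by by_contra hP; exact hk (h k hP), rfl⟩)

lemma card_box {v : ℕ} (P : Fin v → Prop) [DecidablePred P] :
    (Finset.univ.filter fun x : Fin v → ZMod 2 => ∀ j, ¬ P j → x j = 0).card
      = 2 ^ (Finset.univ.filter P).card := by
  have h := Finset.card_bij'
    (s := Finset.univ.filter fun x : Fin v → ZMod 2 => ∀ j, ¬ P j → x j = 0)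
    (t := (Finset.univ : Finset ({j : Fin v // P j} → ZMod 2)))
    (i := fun x _ => fun j => x j.1)
    (j := fun g _ => fun j => if h : P j then g ⟨j, h⟩ else 0)
    (fun a ha => Finset.mem_univ _)
    (fun g hg => by
      simp only [Finset.mem_filter, Finset.mem_univ, true_and]
      intro j hj; simp [hj])
    (fun x hx => by
      simp only [Finset.mem_filter, Finset.mem_univ, true_and] at hx
      funext j
      by_cases hj : P j
      · simp [hj]
      · simp [hj, hx j hj])
    (fun g hg => by funext j; simp [j.2])
  rw [h]
  rw [show (Finset.univ : Finset ({j : Fin v // P j} → ZMod 2)).card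
      = Fintype.card ({j : Fin v // P j} → ZMod 2) from rfl]
  rw [Fintype.card_fun, Fintype.card_subtype]
  norm_num

lemma card_filter_Ico {v a b : ℕ} (hb : b ≤ v) :
    (Finset.univ.filter fun j : Fin v => a ≤ (j:ℕ) ∧ (j:ℕ) < b).card = b - a := by
  rw [← Nat.card_Ico a b]
  refine Finset.card_bij' (i := fun (j : Fin v) _ => (j : ℕ))
    (j := fun n hn => (⟨n, by simp only [Finset.mem_Ico] at hn; omega⟩ : Fin v))
    ?_ ?_ ?_ ?_
  · intro j hj; simp only [Finset.mem_filter, Finset.mem_univ, true_and] at hj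
    simp only [Finset.mem_Ico]; omega
  · intro n hn; simp only [Finset.mem_Ico] at hn
    simp only [Finset.mem_filter, Finset.mem_univ, true_and]; exact hn
  · intro j hj; rfl
  · intro n hn; rfl

lemma card_filter_lt {v b : ℕ} (hb : b ≤ v) :
    (Finset.univ.filter fun j : Fin v => (j:ℕ) < b).card = b := by
  have h := card_filter_Ico (a := 0) (v := v) hb
  rw [show (Finset.univ.filter fun j : Fin v => (j:ℕ) < b)
      = (Finset.univ.filter fun j : Fin v => 0 ≤ (j:ℕ) ∧ (j:ℕ) < b) by
    apply Finset.filter_congr; intro j _; simp]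
  omega


lemma zmod2_cases (a : ZMod 2) : a = 0 ∨ a = 1 := by
  revert a; decide

def flp {v : ℕ} (k : Fin v) (x : Fin v → ZMod 2) : Fin v → ZMod 2 :=
  x + Pi.single k 1

lemma flip_apply_ne {v : ℕ} {k j : Fin v} (x : Fin v → ZMod 2) (h : j ≠ k) :
    flp k x j = x j := by
  simp [flp, Pi.single_eq_of_ne h]

lemma flip_flip' {v : ℕ} (x : Fin v → ZMod 2) (k : Fin v) :
    flp k (flp k x) = x := by
  unfold flp
  rw [add_assoc, ← Pi.single_add]
  have h : (1 + 1 : ZMod 2) = 0 := by decide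
  rw [h, Pi.single_zero, add_zero]

lemma size_add_single {v : ℕ} (x : Fin v → ZMod 2) (k : Fin v) (hk : x k = 0) :
    size (flp k x) = size x + 1 := by
  unfold size
  have h : (Finset.univ.filter fun j => flp k x j = 1)
      = insert k (Finset.univ.filter fun j => x j = 1) := by
    ext j
    by_cases h : j = k
    · subst h
      simp only [Finset.mem_filter, Finset.mem_univ, true_and, flp, Pi.add_apply,
        Pi.single_eq_same, hk, Finset.mem_insert]
      simp
      exact Finset.mem_filter.mpr ⟨Finset.mem_univ _, by simp [hk]⟩
    · simp [flip_apply_ne x h, h]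
  rw [h, Finset.card_insert_of_notMem (by simp [hk])]

lemma odd_size_flip {v : ℕ} (x : Fin v → ZMod 2) (k : Fin v) :
    Odd (size (flp k x)) ↔ Even (size x) := by
  rcases zmod2_cases (x k) with h | h
  · rw [size_add_single x k h, Nat.odd_add_one, Nat.not_odd_iff_even]
  · have hy : flp k x k = 0 := by
      simp only [flp, Pi.add_apply, Pi.single_eq_same, h]; decide
    have h2 := size_add_single (flp k x) k hy
    rw [flip_flip'] at h2
    rw [h2, Nat.even_add_one, ← Nat.not_odd_iff_even, not_not]

lemma flip_apply_self {v : ℕ} (k : Fin v) (x : Fin v → ZMod 2) (h : x k = 0) :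
    flp k x k = 1 := by
  simp [flp, h]


def toB (v t i : ℕ) (hit : i < t) (hv : 2*t+2-i ≤ v) (x : Fin v → ZMod 2) :
    Fin v → ZMod 2 :=
  fun j => if h : t+1 ≤ (j:ℕ) ∧ (j:ℕ) < 2*t+2-i then x ⟨(j:ℕ) - (t+1) + i, by omega⟩
    else if (j:ℕ) < i then x j else 0

def toA (v t i : ℕ) (hit : i < t) (hv : 2*t+2-i ≤ v) (x : Fin v → ZMod 2) :
    Fin v → ZMod 2 :=
  fun j => if h : i ≤ (j:ℕ) ∧ (j:ℕ) < t+1 then x ⟨(j:ℕ) - i + (t+1), by omega⟩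
    else if (j:ℕ) < i then x j else 0

def bA (v t : ℕ) (x : Fin v → ZMod 2) : Prop :=
  ∀ j : Fin v, ¬ ((j:ℕ) < t + 1) → x j = 0

def bB (v t i : ℕ) (x : Fin v → ZMod 2) : Prop :=
  ∀ j : Fin v, ¬ ((j:ℕ) < i ∨ (t+1 ≤ (j:ℕ) ∧ (j:ℕ) < 2*t+2-i)) → x j = 0

def bC (v i : ℕ) (x : Fin v → ZMod 2) : Prop :=
  ∀ j : Fin v, ¬ ((j:ℕ) < i) → x j = 0

lemma toB_apply_lt {v t i : ℕ} (hit : i < t) (hv : 2*t+2-i ≤ v) (x : Fin v → ZMod 2) {j : Fin v} (hj : (j:ℕ) < i) :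
    toB v t i hit hv x j = x j := by
  unfold toB
  rw [dif_neg (by omega), if_pos hj]

lemma toA_apply_lt {v t i : ℕ} (hit : i < t) (hv : 2*t+2-i ≤ v) (x : Fin v → ZMod 2) {j : Fin v} (hj : (j:ℕ) < i) :
    toA v t i hit hv x j = x j := by
  unfold toA
  rw [dif_neg (by omega), if_pos hj]

lemma toB_shift {v t i : ℕ} (hit : i < t) (hv : 2*t+2-i ≤ v) (x : Fin v → ZMod 2) (j : Fin v) (hj : i ≤ (j:ℕ) ∧ (j:ℕ) < t+1) :
    toB v t i hit hv x ⟨(j:ℕ) - i + (t+1), by omega⟩ = x j := by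
  unfold toB
  rw [dif_pos (by simp only []; omega)]
  congr 1
  apply Fin.ext
  simp only []
  omega

lemma toA_shift {v t i : ℕ} (hit : i < t) (hv : 2*t+2-i ≤ v) (x : Fin v → ZMod 2) (j : Fin v)
    (hj : t+1 ≤ (j:ℕ) ∧ (j:ℕ) < 2*t+2-i) :
    toA v t i hit hv x ⟨(j:ℕ) - (t+1) + i, by omega⟩ = x j := by
  unfold toA
  rw [dif_pos (by simp only []; omega)]
  congr 1
  apply Fin.ext
  simp only []
  omega

lemma bB_toB {v t i : ℕ} (hit : i < t) (hv : 2*t+2-i ≤ v) (x : Fin v → ZMod 2) : bB v t i (toB v t i hit hv x) := by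
  intro j hj
  unfold toB
  rw [dif_neg (by omega), if_neg (by omega)]

lemma bA_toA {v t i : ℕ} (hit : i < t) (hv : 2*t+2-i ≤ v) (x : Fin v → ZMod 2) : bA v t (toA v t i hit hv x) := by
  intro j hj
  unfold toA
  rw [dif_neg (by omega), if_neg (by omega)]

lemma toA_toB {v t i : ℕ} (hit : i < t) (hv : 2*t+2-i ≤ v) (x : Fin v → ZMod 2) (hx : bA v t x) :
    toA v t i hit hv (toB v t i hit hv x) = x := by
  funext j
  by_cases h1 : (j:ℕ) < i
  · rw [toA_apply_lt hit hv _ h1, toB_apply_lt hit hv _ h1]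
  by_cases h2 : (j:ℕ) < t+1
  · have key := toB_shift hit hv x j ⟨by omega, h2⟩
    unfold toA
    rw [dif_pos ⟨by omega, h2⟩]
    exact key
  · unfold toA
    rw [dif_neg (by omega), if_neg h1]
    exact (hx j h2).symm

lemma toB_toA {v t i : ℕ} (hit : i < t) (hv : 2*t+2-i ≤ v) (x : Fin v → ZMod 2) (hx : bB v t i x) :
    toB v t i hit hv (toA v t i hit hv x) = x := by
  funext j
  by_cases h1 : (j:ℕ) < i
  · rw [toB_apply_lt hit hv _ h1, toA_apply_lt hit hv _ h1]
  by_cases h2 : t+1 ≤ (j:ℕ) ∧ (j:ℕ) < 2*t+2-i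
  · have key := toA_shift hit hv x j h2
    unfold toB
    rw [dif_pos h2]
    exact key
  · unfold toB
    rw [dif_neg h2, if_neg h1]
    exact (hx j (by omega)).symm

lemma bC_toB_iff {v t i : ℕ} (hit : i < t) (hv : 2*t+2-i ≤ v) (x : Fin v → ZMod 2) (hx : bA v t x) :
    bC v i (toB v t i hit hv x) ↔ bC v i x := by
  constructor
  · intro hbc j hj
    by_cases h2 : (j:ℕ) < t+1
    · have key := toB_shift hit hv x j ⟨by omega, h2⟩
      rw [← key]
      exact hbc _ (by simp only []; omega)
    · exact hx j h2
  · intro hc j hj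
    unfold toB
    by_cases h : t+1 ≤ (j:ℕ) ∧ (j:ℕ) < 2*t+2-i
    · rw [dif_pos h]
      exact hc _ (by simp only []; omega)
    · rw [dif_neg h, if_neg hj]

lemma bC_toA_iff {v t i : ℕ} (hit : i < t) (hv : 2*t+2-i ≤ v) (x : Fin v → ZMod 2) (hx : bB v t i x) :
    bC v i (toA v t i hit hv x) ↔ bC v i x := by
  have h4 := toB_toA hit hv x hx
  have h5 := bC_toB_iff hit hv (toA v t i hit hv x) (bA_toA hit hv x)
  rw [h4] at h5
  exact h5.symm

def sigAB (v t i : ℕ) (hit : i < t) (hv : 2*t+2-i ≤ v) (j : Fin v) : Fin v :=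
  if h : i ≤ (j:ℕ) ∧ (j:ℕ) < t+1 then ⟨(j:ℕ) - i + (t+1), by omega⟩ else j

lemma size_toB {v t i : ℕ} (hit : i < t) (hv : 2*t+2-i ≤ v) (x : Fin v → ZMod 2) (hx : bA v t x) :
    size (toB v t i hit hv x) = size x := by
  unfold size
  have himg : (Finset.univ.filter fun j => toB v t i hit hv x j = 1)
      = (Finset.univ.filter fun j => x j = 1).image (sigAB v t i hit hv) := by
    ext k
    simp only [Finset.mem_filter, Finset.mem_univ, true_and, Finset.mem_image]
    constructor
    · intro hk
      by_cases h : t+1 ≤ (k:ℕ) ∧ (k:ℕ) < 2*t+2-i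
      · refine ⟨⟨(k:ℕ) - (t+1) + i, by omega⟩, ?_, ?_⟩
        · rw [← hk]
          unfold toB
          rw [dif_pos h]
        · unfold sigAB
          rw [dif_pos (by simp only []; omega)]
          apply Fin.ext
          simp only []
          omega
      · by_cases h2 : (k:ℕ) < i
        · refine ⟨k, by rwa [toB_apply_lt hit hv x h2] at hk, ?_⟩
          unfold sigAB
          rw [dif_neg (by omega)]
        · exfalso
          unfold toB at hk
          rw [dif_neg h, if_neg h2] at hk
          exact (by decide : (0:ZMod 2) ≠ 1) hk
    · rintro ⟨j, hj, rfl⟩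
      have hjt : (j:ℕ) < t+1 := by
        by_contra h
        rw [hx j h] at hj
        exact (by decide : (0:ZMod 2) ≠ 1) hj
      by_cases h : i ≤ (j:ℕ)
      · unfold sigAB
        rw [dif_pos ⟨h, hjt⟩]
        rw [toB_shift hit hv x j ⟨h, hjt⟩]
        exact hj
      · unfold sigAB
        rw [dif_neg (by omega)]
        rw [toB_apply_lt hit hv x (by omega)]
        exact hj
  rw [himg]
  apply Finset.card_image_of_injOn
  intro a ha b hb hab
  simp only [Finset.coe_filter, Set.mem_setOf_eq, Finset.mem_univ, true_and] at ha hb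
  have hat : (a:ℕ) < t+1 := by
    by_contra h; rw [hx a h] at ha; exact (by decide : (0:ZMod 2) ≠ 1) ha
  have hbt : (b:ℕ) < t+1 := by
    by_contra h; rw [hx b h] at hb; exact (by decide : (0:ZMod 2) ≠ 1) hb
  unfold sigAB at hab
  by_cases h1 : i ≤ (a:ℕ) <;> by_cases h2 : i ≤ (b:ℕ)
  · rw [dif_pos ⟨h1, hat⟩, dif_pos ⟨h2, hbt⟩] at hab
    have := congrArg Fin.val hab
    simp only [] at this
    exact Fin.ext (by omega)
  · rw [dif_pos ⟨h1, hat⟩, dif_neg (by omega)] at hab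
    have := congrArg Fin.val hab
    simp only [] at this
    exact absurd this (by omega)
  · rw [dif_neg (by omega), dif_pos ⟨h2, hbt⟩] at hab
    have := congrArg Fin.val hab
    simp only [] at this
    exact absurd this (by omega)
  · rw [dif_neg (by omega), dif_neg (by omega)] at hab
    exact hab

lemma size_toA {v t i : ℕ} (hit : i < t) (hv : 2*t+2-i ≤ v) (x : Fin v → ZMod 2) (hx : bB v t i x) :
    size (toA v t i hit hv x) = size x := by
  have h4 := toB_toA hit hv x hx
  have h5 := size_toB hit hv (toA v t i hit hv x) (bA_toA hit hv x)
  rw [h4] at h5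
  exact h5.symm


/-- for `t > 0`, `i < t` and `v ≥ 2t+2-i`, the symmetric difference of
the `(t+1)`-dimensional linear subspaces
`T = span({1},…,{i},{i+1},…,{t+1})` and `T' = span({1},…,{i},{t+2},…,{2t+2-i})`
of `F_2^v` splits into a `[t]`-trade of volume `2^(t+1) - 2^i`; the split assigning
the even-weight elements of `T` together with the odd-weight elements of `T' \ T`
to one leg, and the rest to the other leg, is such a trade. -/
theorem symmDiff_subspaces_split (v t i : ℕ) (ht : 0 < t) (hit : i < t)
    (hv : 2 * t + 2 - i ≤ v)
    (T T' : Submodule (ZMod 2) (Fin v → ZMod 2))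
    (hT : T = Submodule.span (ZMod 2)
      {x : Fin v → ZMod 2 | ∃ j : Fin v, (j : ℕ) < t + 1 ∧ x = Pi.single j 1})
    (hT' : T' = Submodule.span (ZMod 2)
      {x : Fin v → ZMod 2 | ∃ j : Fin v,
        ((j : ℕ) < i ∨ (t + 1 ≤ (j : ℕ) ∧ (j : ℕ) < 2 * t + 2 - i)) ∧ x = Pi.single j 1})
    (U : Finset (Fin v → ZMod 2))
    (hU : (U : Set (Fin v → ZMod 2)) =
      ((T : Set (Fin v → ZMod 2)) \ (T' : Set (Fin v → ZMod 2))) ∪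
      ((T' : Set (Fin v → ZMod 2)) \ (T : Set (Fin v → ZMod 2))))
    (T0 T1 : Finset (Fin v → ZMod 2))
    (hT0 : T0 = U.filter (fun x => (x ∈ T ∧ Even (size x)) ∨ (x ∉ T ∧ Odd (size x))))
    (hT1 : T1 = U \ T0) :
    IsTrade t v T0 T1 ∧ T0 ∪ T1 = U ∧ T0.card = 2 ^ (t + 1) - 2 ^ i := by
  have hv2 : 2*t+2-i ≤ v := hv
  have hv1 : t + 1 ≤ v := by omega
  have hiv : i ≤ v := by omega
  have hone : (0 : ZMod 2) ≠ 1 := by decide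
  have hmA : ∀ x, x ∈ T ↔ bA v t x := by
    intro x; rw [hT]; exact mem_span_single_iff (fun j : Fin v => (j:ℕ) < t+1) x
  have hmB : ∀ x, x ∈ T' ↔ bB v t i x := by
    intro x; rw [hT']
    exact mem_span_single_iff
      (fun j : Fin v => (j:ℕ) < i ∨ (t+1 ≤ (j:ℕ) ∧ (j:ℕ) < 2*t+2-i)) x
  have hCA : ∀ x, bC v i x → bA v t x := fun x hc j hj => hc j (by omega)
  have hCB : ∀ x, bC v i x → bB v t i x := fun x hc j hj => hc j (by omega)
  have hABC : ∀ x, bA v t x → bB v t i x → bC v i x := by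
    intro x ha hb j hj
    by_cases h2 : (j:ℕ) < t+1
    · exact hb j (by omega)
    · exact ha j h2
  have hmU : ∀ x, x ∈ U ↔
      ((bA v t x ∧ ¬ bC v i x) ∨ (bB v t i x ∧ ¬ bC v i x)) := by
    intro x
    have h := Set.ext_iff.mp hU x
    simp only [Finset.mem_coe, Set.mem_union, Set.mem_diff, SetLike.mem_coe] at h
    rw [h, hmA, hmB]
    constructor
    · rintro (⟨ha, hb⟩ | ⟨hb, ha⟩)
      · exact Or.inl ⟨ha, fun hc => hb (hCB x hc)⟩
      · exact Or.inr ⟨hb, fun hc => ha (hCA x hc)⟩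
    · rintro (⟨ha, hc⟩ | ⟨hb, hc⟩)
      · exact Or.inl ⟨ha, fun hb => hc (hABC x ha hb)⟩
      · exact Or.inr ⟨hb, fun ha => hc (hABC x ha hb)⟩
  have hmT0 : ∀ x, x ∈ T0 ↔
      ((bA v t x ∧ ¬ bC v i x ∧ Even (size x)) ∨
       (bB v t i x ∧ ¬ bA v t x ∧ Odd (size x))) := by
    intro x
    rw [hT0, Finset.mem_filter, hmU x, hmA x]
    constructor
    · rintro ⟨hu, (⟨ha, he⟩ | ⟨hna, ho⟩)⟩
      · refine Or.inl ⟨ha, ?_, he⟩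
        rcases hu with ⟨_, hc⟩ | ⟨_, hc⟩ <;> exact hc
      · rcases hu with ⟨ha, _⟩ | ⟨hb, _⟩
        · exact absurd ha hna
        · exact Or.inr ⟨hb, hna, ho⟩
    · rintro (⟨ha, hc, he⟩ | ⟨hb, hna, ho⟩)
      · exact ⟨Or.inl ⟨ha, hc⟩, Or.inl ⟨ha, he⟩⟩
      · exact ⟨Or.inr ⟨hb, fun hc => hna (hCA x hc)⟩, Or.inr ⟨hna, ho⟩⟩
  have hmT1 : ∀ x, x ∈ T1 ↔
      ((bA v t x ∧ ¬ bC v i x ∧ Odd (size x)) ∨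
       (bB v t i x ∧ ¬ bA v t x ∧ Even (size x))) := by
    intro x
    rw [hT1, Finset.mem_sdiff, hmU x]
    constructor
    · rintro ⟨hu, hn0⟩
      rw [hmT0 x] at hn0
      rcases hu with ⟨ha, hc⟩ | ⟨hb, hc⟩
      · refine Or.inl ⟨ha, hc, ?_⟩
        rcases Nat.even_or_odd (size x) with he | ho
        · exact absurd (Or.inl ⟨ha, hc, he⟩) hn0
        · exact ho
      · by_cases ha : bA v t x
        · refine Or.inl ⟨ha, hc, ?_⟩
          rcases Nat.even_or_odd (size x) with he | ho
          · exact absurd (Or.inl ⟨ha, hc, he⟩) hn0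
          · exact ho
        · refine Or.inr ⟨hb, ha, ?_⟩
          rcases Nat.even_or_odd (size x) with he | ho
          · exact he
          · exact absurd (Or.inr ⟨hb, ha, ho⟩) hn0
    · rintro (⟨ha, hc, ho⟩ | ⟨hb, hna, he⟩)
      · refine ⟨Or.inl ⟨ha, hc⟩, ?_⟩
        rw [hmT0 x]
        rintro (⟨_, _, he⟩ | ⟨_, hna, _⟩)
        · exact (Nat.not_odd_iff_even.mpr he) ho
        · exact hna ha
      · refine ⟨Or.inr ⟨hb, fun hc => hna (hCA x hc)⟩, ?_⟩
        rw [hmT0 x]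
        rintro (⟨ha, _, _⟩ | ⟨_, _, ho⟩)
        · exact hna ha
        · exact (Nat.not_odd_iff_even.mpr he) ho
  have hT0U : T0 ⊆ U := by rw [hT0]; exact Finset.filter_subset _ _
  refine ⟨⟨?_, ?_⟩, ?_, ?_⟩
  · -- Disjoint
    rw [hT1]; exact Finset.disjoint_sdiff
  · -- trade condition
    intro s hs
    have hsize : (Finset.univ.filter fun j : Fin v => s j = 1).card ≤ t := hs
    by_cases hsA : ∀ j : Fin v, s j = 1 → (j:ℕ) < t+1
    · by_cases hsC : ∀ j : Fin v, s j = 1 → (j:ℕ) < i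
      · -- case s ⊆ C : shift bijection
        refine Finset.card_bij'
          (i := fun x _ => if bA v t x then toB v t i hit hv x else toA v t i hit hv x)
          (j := fun x _ => if bA v t x then toB v t i hit hv x else toA v t i hit hv x)
          ?_ ?_ ?_ ?_
        · intro x hx
          rw [Finset.mem_filter] at hx
          obtain ⟨hx0, hxs⟩ := hx
          rw [Finset.mem_filter]
          rcases (hmT0 x).mp hx0 with ⟨ha, hc, he⟩ | ⟨hb, hna, ho⟩
          · rw [if_pos ha]
            constructor
            · rw [hmT1]
              refine Or.inr ⟨bB_toB hit hv x, ?_, ?_⟩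
              · intro ha'
                exact hc ((bC_toB_iff hit hv x ha).mp (hABC _ ha' (bB_toB hit hv x)))
              · rw [size_toB hit hv x ha]; exact he
            · intro j hj
              rw [toB_apply_lt hit hv x (hsC j hj)]
              exact hxs j hj
          · rw [if_neg hna]
            constructor
            · rw [hmT1]
              refine Or.inl ⟨bA_toA hit hv x, ?_, ?_⟩
              · rw [bC_toA_iff hit hv x hb]
                exact fun hc => hna (hCA x hc)
              · rw [size_toA hit hv x hb]; exact ho
            · intro j hj
              rw [toA_apply_lt hit hv x (hsC j hj)]
              exact hxs j hj
        · intro x hx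
          rw [Finset.mem_filter] at hx
          obtain ⟨hx1, hxs⟩ := hx
          rw [Finset.mem_filter]
          rcases (hmT1 x).mp hx1 with ⟨ha, hc, ho⟩ | ⟨hb, hna, he⟩
          · rw [if_pos ha]
            constructor
            · rw [hmT0]
              refine Or.inr ⟨bB_toB hit hv x, ?_, ?_⟩
              · intro ha'
                exact hc ((bC_toB_iff hit hv x ha).mp (hABC _ ha' (bB_toB hit hv x)))
              · rw [size_toB hit hv x ha]; exact ho
            · intro j hj
              rw [toB_apply_lt hit hv x (hsC j hj)]
              exact hxs j hj
          · rw [if_neg hna]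
            constructor
            · rw [hmT0]
              refine Or.inl ⟨bA_toA hit hv x, ?_, ?_⟩
              · rw [bC_toA_iff hit hv x hb]
                exact fun hc => hna (hCA x hc)
              · rw [size_toA hit hv x hb]; exact he
            · intro j hj
              rw [toA_apply_lt hit hv x (hsC j hj)]
              exact hxs j hj
        · intro x hx
          rw [Finset.mem_filter] at hx
          rcases (hmT0 x).mp hx.1 with ⟨ha, hc, _⟩ | ⟨hb, hna, _⟩
          · rw [if_pos ha]
            have hna' : ¬ bA v t (toB v t i hit hv x) := by
              intro ha'
              exact hc ((bC_toB_iff hit hv x ha).mp (hABC _ ha' (bB_toB hit hv x)))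
            rw [if_neg hna']
            exact toA_toB hit hv x ha
          · rw [if_neg hna, if_pos (bA_toA hit hv x)]
            exact toB_toA hit hv x hb
        · intro x hx
          rw [Finset.mem_filter] at hx
          rcases (hmT1 x).mp hx.1 with ⟨ha, hc, _⟩ | ⟨hb, hna, _⟩
          · rw [if_pos ha]
            have hna' : ¬ bA v t (toB v t i hit hv x) := by
              intro ha'
              exact hc ((bC_toB_iff hit hv x ha).mp (hABC _ ha' (bB_toB hit hv x)))
            rw [if_neg hna']
            exact toA_toB hit hv x ha
          · rw [if_neg hna, if_pos (bA_toA hit hv x)]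
            exact toB_toA hit hv x hb
      · -- case s ⊆ A, s ⊄ C : flip bijection inside A
        push_neg at hsC
        obtain ⟨j0, hj0, hj0i⟩ := hsC
        have hsub : ¬ (Finset.univ.filter fun j : Fin v => (j:ℕ) < t+1) ⊆
            (Finset.univ.filter fun j : Fin v => s j = 1) := by
          intro h
          have := Finset.card_le_card h
          rw [card_filter_lt hv1] at this
          omega
        obtain ⟨k, hk1, hk2⟩ := Finset.not_subset.mp hsub
        rw [Finset.mem_filter] at hk1
        have hkt : (k:ℕ) < t+1 := hk1.2
        have hsk : s k = 0 := by
          rcases zmod2_cases (s k) with h | h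
          · exact h
          · exact absurd (Finset.mem_filter.mpr ⟨Finset.mem_univ k, h⟩ :
              k ∈ Finset.univ.filter (fun j : Fin v => s j = 1)) hk2
        have hbr : ∀ x : Fin v → ZMod 2,
            (∀ j, s j = 1 → x j = 1) → ¬ bB v t i x := by
          intro x hxs hb
          have h0 : x j0 = 0 := hb j0 (by
            have := hsA j0 hj0
            omega)
          rw [hxs j0 hj0] at h0
          exact hone h0.symm
        have hmain : ∀ x : Fin v → ZMod 2, (∀ j, s j = 1 → x j = 1) →
            bA v t x → ¬ bC v i x →
            ((∀ j, s j = 1 → flp k x j = 1) ∧ bA v t (flp k x) ∧ ¬ bC v i (flp k x)) := by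
          intro x hxs ha hc
          have hflipS : ∀ j, s j = 1 → flp k x j = 1 := by
            intro j hj
            have hne : j ≠ k := by
              intro h; rw [h, hsk] at hj; exact hone hj
            rw [flip_apply_ne x hne]
            exact hxs j hj
          refine ⟨hflipS, ?_, ?_⟩
          · intro j hj
            have hne : j ≠ k := by
              intro h
              rw [h] at hj
              omega
            rw [flip_apply_ne x hne]
            exact ha j hj
          · intro hc'
            have h0 := hc' j0 (by omega)
            rw [hflipS j0 hj0] at h0
            exact hone h0.symm
        refine Finset.card_bij' (i := fun x _ => flp k x) (j := fun x _ => flp k x)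
          ?_ ?_ ?_ ?_
        · intro x hx
          rw [Finset.mem_filter] at hx ⊢
          obtain ⟨hx0, hxs⟩ := hx
          rcases (hmT0 x).mp hx0 with ⟨ha, hc, he⟩ | ⟨hb, _, _⟩
          · obtain ⟨h1, h2, h3⟩ := hmain x hxs ha hc
            refine ⟨?_, h1⟩
            rw [hmT1]
            refine Or.inl ⟨h2, h3, ?_⟩
            rw [odd_size_flip]
            exact he
          · exact absurd hb (hbr x hxs)
        · intro x hx
          rw [Finset.mem_filter] at hx ⊢
          obtain ⟨hx1, hxs⟩ := hx
          rcases (hmT1 x).mp hx1 with ⟨ha, hc, ho⟩ | ⟨hb, _, _⟩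
          · obtain ⟨h1, h2, h3⟩ := hmain x hxs ha hc
            refine ⟨?_, h1⟩
            rw [hmT0]
            refine Or.inl ⟨h2, h3, ?_⟩
            rw [← Nat.not_odd_iff_even, odd_size_flip, Nat.not_even_iff_odd]
            exact ho
          · exact absurd hb (hbr x hxs)
        · intro x _; exact flip_flip' x k
        · intro x _; exact flip_flip' x k
    · -- ¬ (s ⊆ A)
      push_neg at hsA
      obtain ⟨j0, hj0, hj0t⟩ := hsA
      have hbrA : ∀ x : Fin v → ZMod 2,
          (∀ j, s j = 1 → x j = 1) → ¬ bA v t x := by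
        intro x hxs ha
        have h0 := ha j0 (by omega)
        rw [hxs j0 hj0] at h0
        exact hone h0.symm
      by_cases hsB : ∀ j : Fin v, s j = 1 →
          ((j:ℕ) < i ∨ (t+1 ≤ (j:ℕ) ∧ (j:ℕ) < 2*t+2-i))
      · -- case s ⊆ B, s ⊄ A : flip bijection inside B
        have hcardB : (Finset.univ.filter fun j : Fin v =>
            (j:ℕ) < i ∨ (t+1 ≤ (j:ℕ) ∧ (j:ℕ) < 2*t+2-i)).card = t+1 := by
          rw [Finset.filter_or, Finset.card_union_of_disjoint]
          · rw [card_filter_lt hiv, card_filter_Ico hv2]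
            omega
          · rw [Finset.disjoint_left]
            intro a ha hb
            rw [Finset.mem_filter] at ha hb
            omega
        have hsub : ¬ (Finset.univ.filter fun j : Fin v =>
            (j:ℕ) < i ∨ (t+1 ≤ (j:ℕ) ∧ (j:ℕ) < 2*t+2-i)) ⊆
            (Finset.univ.filter fun j : Fin v => s j = 1) := by
          intro h
          have := Finset.card_le_card h
          rw [hcardB] at this
          omega
        obtain ⟨k, hk1, hk2⟩ := Finset.not_subset.mp hsub
        rw [Finset.mem_filter] at hk1
        have hkB : (k:ℕ) < i ∨ (t+1 ≤ (k:ℕ) ∧ (k:ℕ) < 2*t+2-i) := hk1.2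
        have hsk : s k = 0 := by
          rcases zmod2_cases (s k) with h | h
          · exact h
          · exact absurd (Finset.mem_filter.mpr ⟨Finset.mem_univ k, h⟩ :
              k ∈ Finset.univ.filter (fun j : Fin v => s j = 1)) hk2
        have hmain : ∀ x : Fin v → ZMod 2, (∀ j, s j = 1 → x j = 1) →
            bB v t i x →
            ((∀ j, s j = 1 → flp k x j = 1) ∧ bB v t i (flp k x) ∧
              ¬ bA v t (flp k x)) := by
          intro x hxs hb
          have hflipS : ∀ j, s j = 1 → flp k x j = 1 := by
            intro j hj
            have hne : j ≠ k := by
              intro h; rw [h, hsk] at hj; exact hone hj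
            rw [flip_apply_ne x hne]
            exact hxs j hj
          refine ⟨hflipS, ?_, ?_⟩
          · intro j hj
            have hne : j ≠ k := by
              intro h
              rw [h] at hj
              exact hj hkB
            rw [flip_apply_ne x hne]
            exact hb j hj
          · intro ha
            have h0 := ha j0 (by omega)
            rw [hflipS j0 hj0] at h0
            exact hone h0.symm
        refine Finset.card_bij' (i := fun x _ => flp k x) (j := fun x _ => flp k x)
          ?_ ?_ ?_ ?_
        · intro x hx
          rw [Finset.mem_filter] at hx ⊢
          obtain ⟨hx0, hxs⟩ := hx
          rcases (hmT0 x).mp hx0 with ⟨ha, _, _⟩ | ⟨hb, _, ho⟩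
          · exact absurd ha (hbrA x hxs)
          · obtain ⟨h1, h2, h3⟩ := hmain x hxs hb
            refine ⟨?_, h1⟩
            rw [hmT1]
            refine Or.inr ⟨h2, h3, ?_⟩
            rw [← Nat.not_odd_iff_even, odd_size_flip, Nat.not_even_iff_odd]
            exact ho
        · intro x hx
          rw [Finset.mem_filter] at hx ⊢
          obtain ⟨hx1, hxs⟩ := hx
          rcases (hmT1 x).mp hx1 with ⟨ha, _, _⟩ | ⟨hb, _, he⟩
          · exact absurd ha (hbrA x hxs)
          · obtain ⟨h1, h2, h3⟩ := hmain x hxs hb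
            refine ⟨?_, h1⟩
            rw [hmT0]
            refine Or.inr ⟨h2, h3, ?_⟩
            rw [odd_size_flip]
            exact he
        · intro x _; exact flip_flip' x k
        · intro x _; exact flip_flip' x k
      · -- case s ⊄ A and s ⊄ B : both sides empty
        push_neg at hsB
        obtain ⟨j1, hj1, hj1B⟩ := hsB
        have hbrB : ∀ x : Fin v → ZMod 2,
            (∀ j, s j = 1 → x j = 1) → ¬ bB v t i x := by
          intro x hxs hb
          have h0 := hb j1 (by omega)
          rw [hxs j1 hj1] at h0
          exact hone h0.symm
        have h0 : T0.filter (fun x => ∀ j, s j = 1 → x j = 1) = ∅ := by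
          rw [Finset.filter_eq_empty_iff]
          intro x hx hxs
          rcases (hmT0 x).mp hx with ⟨ha, _, _⟩ | ⟨hb, _, _⟩
          · exact hbrA x hxs ha
          · exact hbrB x hxs hb
        have h1 : T1.filter (fun x => ∀ j, s j = 1 → x j = 1) = ∅ := by
          rw [Finset.filter_eq_empty_iff]
          intro x hx hxs
          rcases (hmT1 x).mp hx with ⟨ha, _, _⟩ | ⟨hb, _, _⟩
          · exact hbrA x hxs ha
          · exact hbrB x hxs hb
        rw [h0, h1]
  · -- union
    rw [hT1]; exact Finset.union_sdiff_of_subset hT0U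
  · -- cardinality
    classical
    set E := Finset.univ.filter
      (fun x : Fin v → ZMod 2 => bA v t x ∧ ¬ bC v i x ∧ Even (size x)) with hE
    set O := Finset.univ.filter
      (fun x : Fin v → ZMod 2 => bB v t i x ∧ ¬ bA v t x ∧ Odd (size x)) with hO
    set O' := Finset.univ.filter
      (fun x : Fin v → ZMod 2 => bA v t x ∧ ¬ bC v i x ∧ Odd (size x)) with hO'
    have hT0EO : T0 = E ∪ O := by
      ext x
      rw [hmT0 x, Finset.mem_union, hE, hO]
      simp only [Finset.mem_filter, Finset.mem_univ, true_and]
    have hdisj : Disjoint E O := by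
      rw [Finset.disjoint_left]
      intro x hx hx'
      rw [hE, Finset.mem_filter] at hx
      rw [hO, Finset.mem_filter] at hx'
      exact hx'.2.2.1 hx.2.1
    have hOO' : O.card = O'.card := by
      refine Finset.card_bij' (i := fun x _ => toA v t i hit hv x)
        (j := fun x _ => toB v t i hit hv x) ?_ ?_ ?_ ?_
      · intro x hx
        rw [hO, Finset.mem_filter] at hx
        obtain ⟨_, hb, hna, ho⟩ := hx
        have hc : ¬ bC v i x := fun hc => hna (hCA x hc)
        rw [hO', Finset.mem_filter]
        refine ⟨Finset.mem_univ _, bA_toA hit hv x, ?_, ?_⟩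
        · rw [bC_toA_iff hit hv x hb]; exact hc
        · rw [size_toA hit hv x hb]; exact ho
      · intro x hx
        rw [hO', Finset.mem_filter] at hx
        obtain ⟨_, ha, hc, ho⟩ := hx
        rw [hO, Finset.mem_filter]
        refine ⟨Finset.mem_univ _, bB_toB hit hv x, ?_, ?_⟩
        · intro ha'
          exact hc ((bC_toB_iff hit hv x ha).mp (hABC _ ha' (bB_toB hit hv x)))
        · rw [size_toB hit hv x ha]; exact ho
      · intro x hx
        rw [hO, Finset.mem_filter] at hx
        exact toB_toA hit hv x hx.2.1
      · intro x hx
        rw [hO', Finset.mem_filter] at hx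
        exact toA_toB hit hv x hx.2.1
    have hAnotC : E.card + O'.card
        = (Finset.univ.filter (fun x : Fin v → ZMod 2 => bA v t x ∧ ¬ bC v i x)).card := by
      have h := Finset.card_filter_add_card_filter_not
        (s := Finset.univ.filter (fun x : Fin v → ZMod 2 => bA v t x ∧ ¬ bC v i x))
        (p := fun x => Even (size x))
      have hEe : Finset.univ.filter
          (fun a : Fin v → ZMod 2 => (bA v t a ∧ ¬ bC v i a) ∧ Even (size a)) = E := by
        rw [hE]; apply Finset.filter_congr; intro x _; tauto
      have hOe : Finset.univ.filter
          (fun a : Fin v → ZMod 2 => (bA v t a ∧ ¬ bC v i a) ∧ ¬ Even (size a)) = O' := by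
        rw [hO']; apply Finset.filter_congr; intro x _
        simp only [Nat.not_even_iff_odd]; tauto
      rw [Finset.filter_filter, Finset.filter_filter, hEe, hOe] at h
      exact h
    have hcardA : (Finset.univ.filter (fun x : Fin v → ZMod 2 => bA v t x)).card
        = 2 ^ (t+1) := by
      rw [show (Finset.univ.filter (fun x : Fin v → ZMod 2 => bA v t x))
          = (Finset.univ.filter fun x : Fin v → ZMod 2 =>
              ∀ j : Fin v, ¬ ((j:ℕ) < t+1) → x j = 0)
          from Finset.filter_congr (fun x _ => Iff.rfl)]
      rw [card_box, card_filter_lt hv1]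
    have hcardC : (Finset.univ.filter (fun x : Fin v → ZMod 2 => bC v i x)).card
        = 2 ^ i := by
      rw [show (Finset.univ.filter (fun x : Fin v → ZMod 2 => bC v i x))
          = (Finset.univ.filter fun x : Fin v → ZMod 2 =>
              ∀ j : Fin v, ¬ ((j:ℕ) < i) → x j = 0)
          from Finset.filter_congr (fun x _ => Iff.rfl)]
      rw [card_box, card_filter_lt hiv]
    have hsplit := Finset.card_filter_add_card_filter_not
      (s := Finset.univ.filter (fun x : Fin v → ZMod 2 => bA v t x))
      (p := fun x => bC v i x)
    rw [Finset.filter_filter, Finset.filter_filter] at hsplit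
    have h1 : (Finset.univ.filter (fun x : Fin v → ZMod 2 => bA v t x ∧ bC v i x))
        = Finset.univ.filter (fun x : Fin v → ZMod 2 => bC v i x) := by
      apply Finset.filter_congr; intro x _
      constructor
      · rintro ⟨_, hc⟩; exact hc
      · intro hc; exact ⟨hCA x hc, hc⟩
    rw [h1, hcardC, hcardA] at hsplit
    rw [hT0EO, Finset.card_union_of_disjoint hdisj, hOO', hAnotC]
    omega
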